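/- The isotropy group in GL(2,ℝ) of the binary cubic form x²y/2 − xy²/2 is the group of order 6 consisting of the matrices {I, [[0,−1],[1,−1]], [[0,−1],[−1,0]], [[−1,1],[0,1]], [[1,0],[1,−1]], [[−1,1],[−1,0]]}, which is isomorphic to the symmetric group on 3 letters. -/

import Mathlib

open Matrix

/-- The six matrices forming the isotropy group of `x²y/2 − xy²/2`. -/
def sigma3Set : Set (Matrix (Fin 2) (Fin 2) ℝ) :=
  {1, !![0, -1; 1, -1], !![0, -1; -1, 0], !![-1, 1; 0, 1], !![1, 0; 1, -1],
    !![-1, 1; -1, 0]}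

/-- Auxiliary: real cube roots of one. -/
lemma aux_cube_one {x : ℝ} (h : x ^ 3 = 1) : x = 1 := by
  have h1 : (x - 1) * (x ^ 2 + x + 1) = 0 := by linear_combination h
  rcases mul_eq_zero.mp h1 with h2 | h2
  · linarith
  · nlinarith [sq_nonneg (2 * x + 1)]

/-- Auxiliary: real cube roots of minus one. -/
lemma aux_cube_negone {x : ℝ} (h : x ^ 3 = -1) : x = -1 := by
  have := aux_cube_one (x := -x) (by ring_nf; linarith [h])
  linarith

/-- Auxiliary: the explicit isomorphism `Σ₃ → GL₂(ℝ)`. -/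
noncomputable def auxRho (σ : Equiv.Perm (Fin 3)) : Matrix (Fin 2) (Fin 2) ℝ :=
  if σ = 1 then 1
  else if σ = Equiv.swap 0 1 then !![0, -1; -1, 0]
  else if σ = Equiv.swap 1 2 then !![-1, 1; 0, 1]
  else if σ = Equiv.swap 0 2 then !![1, 0; 1, -1]
  else if σ = Equiv.swap 0 1 * Equiv.swap 1 2 then !![0, -1; 1, -1]
  else !![-1, 1; -1, 0]

/-- Auxiliary: the six elements of `Σ₃`. -/
lemma aux_perm3_cases (σ : Equiv.Perm (Fin 3)) :
    σ = 1 ∨ σ = Equiv.swap 0 1 ∨ σ = Equiv.swap 1 2 ∨ σ = Equiv.swap 0 2 ∨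
    σ = Equiv.swap 0 1 * Equiv.swap 1 2 ∨ σ = Equiv.swap 1 2 * Equiv.swap 0 1 := by
  revert σ; decide

/-- Auxiliary: the forward (hard) direction of the isotropy computation. -/
lemma aux_forward (g : Matrix (Fin 2) (Fin 2) ℝ)
    (h : ∀ v : Fin 2 → ℝ,
      (g.mulVec v 0) ^ 2 * (g.mulVec v 1) / 2 -
          (g.mulVec v 0) * (g.mulVec v 1) ^ 2 / 2 =
        (v 0) ^ 2 * v 1 / 2 - v 0 * (v 1) ^ 2 / 2) : g ∈ sigma3Set := by
  obtain ⟨a, b, c, d, rfl⟩ : ∃ a b c d, g = !![a, b; c, d] :=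
    ⟨_, _, _, _, Matrix.eta_fin_two g⟩
  have h1 := h ![1, 0]
  have h2 := h ![0, 1]
  have h3 := h ![1, 1]
  have h4 := h ![1, -1]
  simp [Matrix.mulVec, dotProduct, Fin.sum_univ_two] at h1 h2 h3 h4
  have e1 : a * c * (a - c) = 0 := by linear_combination 2 * h1
  have e2 : b * d * (b - d) = 0 := by linear_combination 2 * h2
  have eA : a^2*d + 2*a*b*c - 2*a*c*d - b*c^2 = 1 := by linear_combination h3 - h4 - 2*h2
  have eB : 2*a*b*d + b^2*c - a*d^2 - 2*b*c*d = -1 := by linear_combination h3 + h4 - 2*h1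
  clear h h1 h2 h3 h4
  rcases mul_eq_zero.mp e1 with hac | hac'
  · rcases mul_eq_zero.mp hac with rfl | rfl
    · -- a = 0
      rcases mul_eq_zero.mp e2 with hbd | hbd'
      · rcases mul_eq_zero.mp hbd with rfl | rfl
        · exfalso; linarith [eA]
        · -- d = 0 : b = c = -1
          have h5 : b * c * (b - c) = 0 := by linear_combination eB + eA
          rcases mul_eq_zero.mp h5 with hbc | hbc'
          · rcases mul_eq_zero.mp hbc with rfl | rfl
            · exfalso; linarith [eB]
            · exfalso; linarith [eA]
          · obtain rfl : b = c := by linarith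
            have : b = -1 := aux_cube_negone (by linear_combination -eA)
            subst this
            simp [sigma3Set]
      · -- b = d
        obtain rfl : b = d := by linarith
        have eB2 : b^2 * c = 1 := by linear_combination -eB
        have h5 : b * c * (b + c) = 0 := by linear_combination eB2 - eA - 1
        rcases mul_eq_zero.mp h5 with hbc | hbc'
        · rcases mul_eq_zero.mp hbc with rfl | rfl
          · exfalso; linarith [eB2]
          · exfalso; linarith [eB2]
        · obtain rfl : c = -b := by linarith
          have : b = -1 := aux_cube_negone (by linear_combination -eB2)
          subst this
          norm_num
          simp [sigma3Set]
    · -- c = 0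
      rcases mul_eq_zero.mp e2 with hbd | hbd'
      · rcases mul_eq_zero.mp hbd with rfl | rfl
        · -- b = 0 : identity
          have eA2 : a^2 * d = 1 := by linear_combination eA
          have eB2 : a * d^2 = 1 := by linear_combination -eB
          have h5 : a * d * (a - d) = 0 := by linear_combination eA2 - eB2
          rcases mul_eq_zero.mp h5 with had | had'
          · rcases mul_eq_zero.mp had with rfl | rfl
            · exfalso; linarith [eA2]
            · exfalso; linarith [eA2]
          · obtain rfl : a = d := by linarith
            have : a = 1 := aux_cube_one (by linear_combination eA2)
            subst this
            simp [sigma3Set, Matrix.one_fin_two]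
        · exfalso; linarith [eA]
      · -- b = d
        obtain rfl : b = d := by linarith
        have eA2 : a^2 * b = 1 := by linear_combination eA
        have eB2 : a * b^2 = -1 := by linear_combination eB
        have h5 : a * b * (a + b) = 0 := by linear_combination eA2 + eB2
        rcases mul_eq_zero.mp h5 with had | had'
        · rcases mul_eq_zero.mp had with rfl | rfl
          · exfalso; linarith [eA2]
          · exfalso; linarith [eA2]
        · obtain rfl : a = -b := by linarith
          have : b = 1 := aux_cube_one (by linear_combination eA2)
          subst this
          norm_num
          simp [sigma3Set]
  · -- a = c
    obtain rfl : a = c := by linarith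
    rcases mul_eq_zero.mp e2 with hbd | hbd'
    · rcases mul_eq_zero.mp hbd with rfl | rfl
      · -- b = 0
        have eA2 : a^2 * d = -1 := by linear_combination -eA
        have eB2 : a * d^2 = 1 := by linear_combination -eB
        have h5 : a * d * (a + d) = 0 := by linear_combination eA2 + eB2
        rcases mul_eq_zero.mp h5 with hcd | hcd'
        · rcases mul_eq_zero.mp hcd with rfl | rfl
          · exfalso; linarith [eA2]
          · exfalso; linarith [eA2]
        · obtain rfl : a = -d := by linarith
          have : d = -1 := aux_cube_negone (by linear_combination eA2)
          subst this
          norm_num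
          simp [sigma3Set]
      · -- d = 0
        have eA2 : a^2 * b = 1 := by linear_combination eA
        have eB2 : a * b^2 = -1 := by linear_combination eB
        have h5 : a * b * (a + b) = 0 := by linear_combination eA2 + eB2
        rcases mul_eq_zero.mp h5 with hcb | hcb'
        · rcases mul_eq_zero.mp hcb with rfl | rfl
          · exfalso; linarith [eA2]
          · exfalso; linarith [eA2]
        · obtain rfl : a = -b := by linarith
          have : b = 1 := aux_cube_one (by linear_combination eA2)
          subst this
          norm_num
          simp [sigma3Set]
    · -- b = d
      obtain rfl : b = d := by linarith
      exfalso; linarith [eA]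

/-- The isotropy group in `GL(2,ℝ)` of the binary cubic form `x²y/2 − xy²/2`
is the group of order 6 consisting of the six listed matrices, and it is
isomorphic to the symmetric group on 3 letters: there is an injective map
`ρ : Σ₃ → GL(2,ℝ)` which is multiplicative and has image exactly this set. -/
theorem isotropy_three_distinct_factors :
    (∀ g : Matrix (Fin 2) (Fin 2) ℝ, IsUnit g.det →
      ((∀ v : Fin 2 → ℝ,
          (g.mulVec v 0) ^ 2 * (g.mulVec v 1) / 2 -
              (g.mulVec v 0) * (g.mulVec v 1) ^ 2 / 2 =
            (v 0) ^ 2 * v 1 / 2 - v 0 * (v 1) ^ 2 / 2) ↔ g ∈ sigma3Set)) ∧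
    ∃ ρ : Equiv.Perm (Fin 3) → Matrix (Fin 2) (Fin 2) ℝ,
      Function.Injective ρ ∧ (∀ σ τ, ρ (σ * τ) = ρ σ * ρ τ) ∧
      Set.range ρ = sigma3Set := by
  constructor
  · intro g _
    constructor
    · exact aux_forward g
    · intro hg v
      rcases hg with rfl | rfl | rfl | rfl | rfl | rfl <;>
        simp [Matrix.mulVec, dotProduct, Fin.sum_univ_two] <;> ring
  · refine ⟨auxRho, ?_, ?_, ?_⟩
    · intro σ τ h
      rcases aux_perm3_cases σ with rfl|rfl|rfl|rfl|rfl|rfl <;>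
        rcases aux_perm3_cases τ with rfl|rfl|rfl|rfl|rfl|rfl <;>
        simp (config := { decide := true }) only [auxRho] at h ⊢ <;>
        first
          | rfl
          | decide
          | (exfalso
             have h0 := congrFun (congrFun h 0) 0
             have h1 := congrFun (congrFun h 0) 1
             have h2 := congrFun (congrFun h 1) 0
             have h3 := congrFun (congrFun h 1) 1
             simp only [Matrix.one_fin_two] at h0 h1 h2 h3
             revert h0 h1 h2 h3; norm_num)
    · intro σ τ
      rcases aux_perm3_cases σ with rfl|rfl|rfl|rfl|rfl|rfl <;>
        rcases aux_perm3_cases τ with rfl|rfl|rfl|rfl|rfl|rfl <;>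
        simp (config := { decide := true }) only [auxRho] <;>
        norm_num [Matrix.mul_fin_two, Matrix.one_fin_two] <;>
        rw [Matrix.one_fin_two] <;> norm_num
    · ext x
      constructor
      · rintro ⟨σ, rfl⟩
        rcases aux_perm3_cases σ with rfl|rfl|rfl|rfl|rfl|rfl <;>
          simp (config := { decide := true }) only [auxRho] <;>
          simp [sigma3Set]
      · intro hx
        rcases hx with rfl|rfl|rfl|rfl|rfl|rfl
        · exact ⟨1, by simp [auxRho]⟩
        · exact ⟨Equiv.swap 0 1 * Equiv.swap 1 2, by
            simp (config := { decide := true }) [auxRho]⟩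
        · exact ⟨Equiv.swap 0 1, by simp (config := { decide := true }) [auxRho]⟩
        · exact ⟨Equiv.swap 1 2, by simp (config := { decide := true }) [auxRho]⟩
        · exact ⟨Equiv.swap 0 2, by simp (config := { decide := true }) [auxRho]⟩
        · exact ⟨Equiv.swap 1 2 * Equiv.swap 0 1, by
            simp (config := { decide := true }) [auxRho]⟩
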